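/- Let C be a convex subset of a topological real vector space, x ∈ fri C and y ∈ C. Then the half-open segment [x,y) is contained in fri C. -/

import Mathlib

open Pointwise

/-- A face of a convex set `C`: a convex subset `F ⊆ C` such that whenever a point of `F`
lies in the open segment between two points of `C`, both endpoints belong to `F`. -/
def IsFace {X : Type*} [AddCommGroup X] [Module ℝ X] (C F : Set X) : Prop :=
  F ⊆ C ∧ Convex ℝ F ∧
    ∀ x ∈ F, ∀ y ∈ C, ∀ z ∈ C, x ∈ openSegment ℝ y z → y ∈ F ∧ z ∈ F

/-- The minimal face of `C` containing `x`: the intersection of all faces containing `x`. -/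
def minFace {X : Type*} [AddCommGroup X] [Module ℝ X] (C : Set X) (x : X) : Set X :=
  ⋂₀ {F | IsFace C F ∧ x ∈ F}

/-- The conic hull of a set. -/
def coneHull {X : Type*} [AddCommGroup X] [Module ℝ X] (S : Set X) : Set X :=
  {w | ∃ (a : ℝ) (s : X), 0 ≤ a ∧ s ∈ S ∧ w = a • s}

/-- The intrinsic core of a convex set. -/
def icr {X : Type*} [AddCommGroup X] [Module ℝ X] (C : Set X) : Set X :=
  {x ∈ C | ∀ y ∈ C, ∃ z ∈ C, x ∈ openSegment ℝ y z}

/-- The face relative interior of a convex set in a topological vector space. -/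
def fri {X : Type*} [AddCommGroup X] [Module ℝ X] [TopologicalSpace X] (C : Set X) : Set X :=
  {x ∈ C | C ⊆ closure (minFace C x)}

/-- if `x ∈ fri C` and `y ∈ C`, then `[x, y) ⊆ fri C`. -/
theorem segment_subset_fri {X : Type*} [AddCommGroup X] [Module ℝ X] [TopologicalSpace X]
    [IsTopologicalAddGroup X] [ContinuousSMul ℝ X]
    (C : Set X) (hC : Convex ℝ C) (x y : X) (hx : x ∈ fri C) (hy : y ∈ C) :
    ∀ t ∈ Set.Ico (0 : ℝ) 1, (1 - t) • x + t • y ∈ fri C := by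
  rintro t ⟨ht0, ht1⟩
  obtain ⟨hxC, hxcl⟩ := hx
  rcases eq_or_lt_of_le ht0 with rfl | ht0'
  · simpa using ⟨hxC, hxcl⟩
  set z := (1 - t) • x + t • y with hz
  have hzC : z ∈ C := hC hxC hy (by linarith) (le_of_lt ht0') (by ring)
  have hzseg : z ∈ openSegment ℝ x y := ⟨1 - t, t, by linarith, ht0', by ring, rfl⟩
  have hmono : minFace C x ⊆ minFace C z := by
    intro w hw
    intro F hF
    obtain ⟨hFface, hzF⟩ := hF
    have hxF : x ∈ F := (hFface.2.2 z hzF x hxC y hy hzseg).1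
    exact hw F ⟨hFface, hxF⟩
  exact ⟨hzC, fun c hc => closure_mono hmono (hxcl hc)⟩
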